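/- Let v_0,...,v_m lie on a sphere S(c,r) in ℝ^n, and suppose every point of a lattice L containing all v_i satisfies ‖v − c‖ ≥ r (S is an empty sphere of L). Then the distance vector d(i,j) = ‖v_i − v_j‖² is hypermetric: for all b ∈ ℤ^{m+1} with ∑ b_i = 1, ∑_{i<j} b_i b_j d(i,j) ≤ 0. -/

import Mathlib

theorem double_sum_symm {m : ℕ} (F : Fin (m+1) → Fin (m+1) → ℝ)
    (hsymm : ∀ i j, F i j = F j i) (hdiag : ∀ i, F i i = 0) :
    ∑ i, ∑ j, F i j = 2 * ∑ i, ∑ j ∈ Finset.univ.filter (fun j => i < j), F i j := by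
  have key : ∑ i, ∑ j ∈ Finset.univ.filter (fun j => j < i), F i j
      = ∑ i, ∑ j ∈ Finset.univ.filter (fun j => i < j), F i j := by
    rw [Finset.sum_sigma', Finset.sum_sigma']
    refine Finset.sum_nbij' (fun p => ⟨p.2, p.1⟩) (fun p => ⟨p.2, p.1⟩) ?_ ?_ ?_ ?_ ?_ <;>
      simp_all [hsymm]
  have h1 : ∀ i : Fin (m+1), ∑ j, F i j =
      (∑ j ∈ Finset.univ.filter (fun j => i < j), F i j)
      + ∑ j ∈ Finset.univ.filter (fun j => j < i), F i j := by
    intro i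
    rw [← Finset.sum_filter_add_sum_filter_not Finset.univ (fun j => i < j)]
    congr 1
    have : Finset.univ.filter (fun j => ¬ i < j)
        = insert i (Finset.univ.filter (fun j => j < i)) := by
      ext j
      simp [Finset.mem_filter, Finset.mem_insert, not_lt, le_iff_lt_or_eq, eq_comm, or_comm]
    rw [this, Finset.sum_insert (by simp), hdiag, zero_add]
  simp_rw [h1, Finset.sum_add_distrib, key, two_mul]

theorem main_identity {n m : ℕ} (B : Fin (m+1) → ℝ) (u : Fin (m+1) → EuclideanSpace ℝ (Fin n)) :
    ∑ i, ∑ j, B i * B j * ‖u i - u j‖^2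
      = 2 * ((∑ i, B i) * (∑ i, B i * ‖u i‖^2) - ‖∑ i, B i • u i‖^2) := by
  have hinner : ‖∑ i, B i • u i‖^2
      = ∑ i, ∑ j, B i * B j * (inner ℝ (u i) (u j) : ℝ) := by
    rw [← real_inner_self_eq_norm_sq]
    simp_rw [inner_sum, sum_inner, real_inner_smul_left, real_inner_smul_right]
    rw [Finset.sum_comm]
    exact Finset.sum_congr rfl fun i _ => Finset.sum_congr rfl fun j _ => by ring
  have e1 : ∑ i, ∑ j, B i * B j * ‖u i‖^2 = (∑ i, B i * ‖u i‖^2) * (∑ i, B i) := by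
    rw [Finset.sum_mul]
    refine Finset.sum_congr rfl fun i _ => ?_
    rw [Finset.mul_sum]
    exact Finset.sum_congr rfl fun j _ => by ring
  have e2 : ∑ i, ∑ j, B i * B j * ‖u j‖^2 = (∑ i, B i) * (∑ i, B i * ‖u i‖^2) := by
    rw [Finset.sum_mul_sum]
    exact Finset.sum_congr rfl fun i _ => Finset.sum_congr rfl fun j _ => by ring
  calc ∑ i, ∑ j, B i * B j * ‖u i - u j‖^2
      = ∑ i, ∑ j, (B i * B j * ‖u i‖^2 + B i * B j * ‖u j‖^2
          - 2 * (B i * B j * (inner ℝ (u i) (u j) : ℝ))) := by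
        refine Finset.sum_congr rfl fun i _ => Finset.sum_congr rfl fun j _ => ?_
        rw [norm_sub_sq_real]; ring
    _ = (∑ i, ∑ j, B i * B j * ‖u i‖^2) + (∑ i, ∑ j, B i * B j * ‖u j‖^2)
          - 2 * ∑ i, ∑ j, B i * B j * (inner ℝ (u i) (u j) : ℝ) := by
        simp_rw [Finset.sum_sub_distrib, Finset.sum_add_distrib, Finset.mul_sum]
    _ = 2 * ((∑ i, B i) * (∑ i, B i * ‖u i‖^2) - ‖∑ i, B i • u i‖^2) := by
        rw [e1, e2, hinner]; ring

/-- If `v_0,…,v_m` lie on an empty sphere `S(c,r)` of a lattice `L` (every lattice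
point is at distance at least `r` from `c`), then the squared-distance vector
`d(i,j) = ‖v_i − v_j‖²` is hypermetric. -/
theorem squared_distances_on_empty_sphere_hypermetric {n m : ℕ}
    (L : AddSubgroup (EuclideanSpace ℝ (Fin n)))
    (c : EuclideanSpace ℝ (Fin n)) (r : ℝ) (hr : 0 < r)
    (hempty : ∀ x ∈ L, r ≤ ‖x - c‖)
    (v : Fin (m+1) → EuclideanSpace ℝ (Fin n))
    (hvL : ∀ i, v i ∈ L) (hvS : ∀ i, ‖v i - c‖ = r)
    (b : Fin (m+1) → ℤ) (hb : ∑ i, b i = 1) :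
    ∑ i, ∑ j ∈ Finset.univ.filter (fun j => i < j),
      (b i : ℝ) * (b j : ℝ) * ‖v i - v j‖^2 ≤ 0 := by
  set B : Fin (m+1) → ℝ := fun i => (b i : ℝ) with hB
  set u : Fin (m+1) → EuclideanSpace ℝ (Fin n) := fun i => v i - c with hu
  have hBsum : ∑ i, B i = 1 := by
    simp only [hB, ← Int.cast_sum, hb, Int.cast_one]
  have hwL : (∑ i, B i • v i) ∈ L := by
    refine AddSubgroup.sum_mem L fun i _ => ?_
    have h := AddSubgroup.zsmul_mem L (hvL i) (b i)
    rwa [show (b i) • v i = B i • v i from ((Int.cast_smul_eq_zsmul ℝ (b i) (v i)).symm)] at h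
  have hwc : (∑ i, B i • v i) - c = ∑ i, B i • u i := by
    simp only [hu, smul_sub, Finset.sum_sub_distrib, ← Finset.sum_smul, hBsum, one_smul]
  have hr2 : ∑ i, B i * ‖u i‖^2 = r^2 := by
    have : ∀ i, ‖u i‖ = r := fun i => hvS i
    simp_rw [this, ← Finset.sum_mul, hBsum, one_mul]
  have hge : r ≤ ‖(∑ i, B i • v i) - c‖ := hempty _ hwL
  have hge2 : r^2 ≤ ‖∑ i, B i • u i‖^2 := by
    rw [← hwc]
    exact pow_le_pow_left₀ hr.le hge 2
  have hident := main_identity B u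
  have hsymm := double_sum_symm (fun i j => B i * B j * ‖u i - u j‖^2)
    (fun i j => by
      show B i * B j * ‖u i - u j‖^2 = B j * B i * ‖u j - u i‖^2
      rw [norm_sub_rev]; ring) (fun i => by simp)
  have hgoal : ∑ i, ∑ j ∈ Finset.univ.filter (fun j => i < j),
      (b i : ℝ) * (b j : ℝ) * ‖v i - v j‖^2
      = ∑ i, ∑ j ∈ Finset.univ.filter (fun j => i < j), B i * B j * ‖u i - u j‖^2 := by
    refine Finset.sum_congr rfl fun i _ => Finset.sum_congr rfl fun j _ => ?_
    simp only [hB, hu, sub_sub_sub_cancel_right]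
  rw [hgoal]
  rw [hsymm] at hident
  rw [hBsum, one_mul, hr2] at hident
  nlinarith [hident, hge2]
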